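/- Assume the following (Conjecture 3.1): for all real numbers y_1, …, y_ℓ, z such that z is not a rational linear combination of 1, y_1, …, y_ℓ, and for all ε, δ > 0 and every n_0 > 0, there exist positive integers n_0 < n_1 < n_2 < … < n_M and real numbers w_1, …, w_ℓ such that (i) max_{1≤i≤ℓ} ‖n_m·y_i − w_i‖ ≤ ε/2 for every m = 1, …, M, and (ii) setting K = ∏_{m=1}^M (n_m + 1) and k_m = K/(n_m + 1), the Lebesgue measure of (⋃_{m=1}^M ((ℤ + z)/k_m + (−ε/(2K), ε/(2K)))) ∩ [0,1) is at least 1 − δ. Then, for any sequence (y_i)_{i≥1} of real numbers and any sequence (z_i)_{i≥1} of real numbers no element of which is a rational linear combination of 1 and finitely many of the y_i, there exists an approximating function ψ : ℕ → [0,∞) such that: for every i ≥ 1, the set of real x satisfying ‖n·x + y_i‖ < ψ(n) for infinitely many integers n ≥ 1 is Lebesgue-null; and for every i ≥ 1, the set of real x NOT satisfying ‖n·x + z_i‖ < ψ(n) for infinitely many integers n ≥ 1 is Lebesgue-null. -/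

import Mathlib

open MeasureTheory Filter Set
/-- Distance from a real number to the nearest integer. -/
noncomputable def nint (t : ℝ) : ℝ := |t - (round t : ℝ)|

lemma nint_nonneg (t : ℝ) : 0 ≤ nint t := abs_nonneg _

lemma nint_le (t : ℝ) (a : ℤ) : nint t ≤ |t - a| := round_le t a

lemma nint_lt_iff (u ε : ℝ) : nint u < ε ↔ ∃ b : ℤ, |u - b| < ε :=
  ⟨fun h => ⟨round u, h⟩, fun ⟨b, hb⟩ => lt_of_le_of_lt (nint_le u b) hb⟩

lemma nint_add_int (t : ℝ) (a : ℤ) : nint (t + a) = nint t := by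
  unfold nint; rw [round_add_intCast]; push_cast; ring_nf
lemma cover_bound (k : ℕ) (hk : 1 ≤ k) (r d : ℝ) (hr : 0 < r) (hrk : r * k ≤ 1) :
    volume ({x : ℝ | ∃ a : ℤ, |x - ((a : ℝ) + d) / k| < r} ∩ Set.Ico (0:ℝ) 1)
      ≤ ENNReal.ofReal (((k : ℝ) + 4) * (2 * r)) := by
  have hk0 : (0:ℝ) < k := by exact_mod_cast hk
  set F : Finset ℤ := Finset.Icc (⌊-d⌋ - 1) (⌊-d⌋ + k + 2) with hF
  have hsub : {x : ℝ | ∃ a : ℤ, |x - ((a : ℝ) + d) / k| < r} ∩ Set.Ico (0:ℝ) 1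
      ⊆ ⋃ a ∈ F, Metric.ball (((a:ℝ) + d) / k) r := by
    rintro x ⟨⟨a, ha⟩, hx0, hx1⟩
    have hab := abs_lt.1 ha
    have hc : (a:ℝ) + d = (((a:ℝ) + d) / k) * k := by field_simp
    have hlo : (a:ℝ) + d > -1 := by
      have h1 : ((a:ℝ) + d) / k > -r := by linarith [hab.1, hab.2]
      nlinarith [mul_lt_mul_of_pos_right h1 hk0]
    have hhi : (a:ℝ) + d < k + 1 := by
      have h2 : ((a:ℝ) + d) / k < 1 + r := by linarith [hab.1, hab.2]
      nlinarith [mul_lt_mul_of_pos_right h2 hk0]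
    have hfl : (⌊-d⌋ : ℝ) ≤ -d := Int.floor_le _
    have hfl2 : -d < (⌊-d⌋ : ℝ) + 1 := Int.lt_floor_add_one _
    have haF : a ∈ F := by
      rw [hF, Finset.mem_Icc]
      constructor
      · have h3 : ((⌊-d⌋ - 1 : ℤ) : ℝ) < a := by push_cast; linarith
        exact_mod_cast h3.le.lt_of_ne (by intro h; rw [h] at h3; exact lt_irrefl _ h3) |>.le
      · have h4 : (a : ℝ) < ((⌊-d⌋ + k + 2 : ℤ) : ℝ) := by push_cast; linarith
        exact_mod_cast h4.le
    refine Set.mem_biUnion haF ?_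
    simpa [Metric.mem_ball, Real.dist_eq] using ha
  calc volume ({x : ℝ | ∃ a : ℤ, |x - ((a : ℝ) + d) / k| < r} ∩ Set.Ico (0:ℝ) 1)
      ≤ volume (⋃ a ∈ F, Metric.ball (((a:ℝ) + d) / k) r) := measure_mono hsub
    _ ≤ ∑ a ∈ F, volume (Metric.ball (((a:ℝ) + d) / k) r) := measure_biUnion_finset_le F _
    _ = ∑ _a ∈ F, ENNReal.ofReal (2 * r) := by
        refine Finset.sum_congr rfl fun a _ => ?_
        rw [Real.volume_ball]
    _ ≤ ENNReal.ofReal (((k : ℝ) + 4) * (2 * r)) := by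
        rw [Finset.sum_const, hF, Int.card_Icc]
        have hcard : (⌊-d⌋ + ↑k + 2 + 1 - (⌊-d⌋ - 1)).toNat = k + 4 := by omega
        rw [hcard, nsmul_eq_mul]
        rw [← ENNReal.ofReal_natCast (k+4), ← ENNReal.ofReal_mul (by positivity)]
        apply ENNReal.ofReal_le_ofReal
        push_cast
        nlinarith
lemma periodic_null (S : Set ℝ) (hper : ∀ (x : ℝ) (j : ℤ), x ∈ S ↔ x + j ∈ S)
    (h0 : volume (S ∩ Set.Ico (0:ℝ) 1) = 0) : volume S = 0 := by
  have hsub : S ⊆ ⋃ j : ℤ, S ∩ Set.Ico (j : ℝ) (j + 1) := by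
    intro x hx
    exact Set.mem_iUnion.2 ⟨⌊x⌋, hx, Int.floor_le x, Int.lt_floor_add_one x⟩
  refine le_antisymm (le_trans (measure_mono hsub) ?_) zero_le
  refine le_trans (measure_iUnion_le _) ?_
  have hj : ∀ j : ℤ, volume (S ∩ Set.Ico (j:ℝ) (j+1)) = 0 := by
    intro j
    have hpre : (fun x : ℝ => x + (j:ℝ)) ⁻¹' (S ∩ Set.Ico (j:ℝ) (j+1)) = S ∩ Set.Ico 0 1 := by
      ext x
      simp only [Set.mem_preimage, Set.mem_inter_iff, Set.mem_Ico]
      constructor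
      · rintro ⟨hS, h1, h2⟩
        exact ⟨(hper x j).2 hS, by linarith, by linarith⟩
      · rintro ⟨hS, h1, h2⟩
        exact ⟨(hper x j).1 hS, by linarith, by linarith⟩
    have := measure_preimage_add_right (volume : Measure ℝ) (j:ℝ) (S ∩ Set.Ico (j:ℝ) (j+1))
    rw [← this]
    rw [hpre]  -- preimage as set
    exact h0
  simp [hj]
lemma tsum_half_ne_top (f : ℕ → ENNReal) (hf : ∀ s, f s ≤ ENNReal.ofReal ((1/2:ℝ)^s)) :
    ∑' s, f s ≠ ⊤ := by
  have hle : ∑' s, f s ≤ ∑' s : ℕ, (2⁻¹ : ENNReal)^s := by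
    apply ENNReal.tsum_le_tsum
    intro s
    refine (hf s).trans ?_
    have h2 : ENNReal.ofReal ((1/2:ℝ)) = 2⁻¹ := by
      rw [one_div, ENNReal.ofReal_inv_of_pos (by norm_num)]
      norm_num
    rw [ENNReal.ofReal_pow (by norm_num), h2]
  rw [ENNReal.tsum_geometric] at hle
  refine ne_top_of_le_ne_top ?_ hle
  rw [ENNReal.inv_ne_top]
  simp
noncomputable def εd (t : ℕ) : ℝ := 1 / 2 ^ (t + 4)

lemma εd_pos (t : ℕ) : 0 < εd t := by unfold εd; positivity

lemma εd_le (t : ℕ) : εd t ≤ 1 / 16 := by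
  unfold εd
  rw [div_le_div_iff₀ (by positivity) (by norm_num)]
  have : (2:ℝ)^4 ≤ 2 ^ (t+4) := pow_le_pow_right₀ (by norm_num) (by omega)
  norm_num at this ⊢
  linarith

def it (t : ℕ) : ℕ := (Nat.unpair t).1 + 1

lemma stage_exists
    (conj : ∀ (ℓ : ℕ) (y : Fin ℓ → ℝ) (z : ℝ),
      (¬ ∃ (b : ℚ) (a : Fin ℓ → ℚ), z = (b : ℝ) + ∑ i : Fin ℓ, (a i : ℝ) * y i) →
      ∀ ε > (0 : ℝ), ∀ δ > (0 : ℝ), ∀ n₀ : ℕ, 0 < n₀ →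
        ∃ (M : ℕ) (n : Fin M → ℕ) (w : Fin ℓ → ℝ),
          1 ≤ M ∧ StrictMono n ∧ (∀ m, n₀ < n m) ∧
          (∀ m : Fin M, ∀ i : Fin ℓ, nint ((n m : ℝ) * y i - w i) ≤ ε / 2) ∧
          ENNReal.ofReal (1 - δ) ≤
            volume ((⋃ m : Fin M, {x : ℝ | ∃ a : ℤ,
              |x - ((a : ℝ) + z) /
                  ((∏ m' : Fin M, ((n m' : ℝ) + 1)) / ((n m : ℝ) + 1))| <
                ε / (2 * ∏ m' : Fin M, ((n m' : ℝ) + 1))}) ∩ Set.Ico (0:ℝ) 1))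
    (y z : ℕ → ℝ)
    (hz : ∀ i : ℕ, 1 ≤ i →
      ¬ ∃ (ℓ : ℕ) (b : ℚ) (a : Fin ℓ → ℚ) (idx : Fin ℓ → ℕ),
        (∀ j, 1 ≤ idx j) ∧ z i = (b : ℝ) + ∑ j : Fin ℓ, (a j : ℝ) * y (idx j))
    (t n₀ : ℕ) :
    ∃ (M : ℕ) (n : Fin M → ℕ) (w : Fin (t+1) → ℝ),
      2 ≤ M ∧ StrictMono n ∧ (∀ m, n₀ < n m) ∧
      (∀ m : Fin M, ∀ i : Fin (t+1), nint ((n m : ℝ) * y ((i:ℕ)+1) - w i) ≤ εd t / 2) ∧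
      ENNReal.ofReal (1 - εd t) ≤
        volume ((⋃ m : Fin M, {x : ℝ | ∃ a : ℤ,
          |x - ((a : ℝ) + -(z (it t))) /
              ((∏ m' : Fin M, ((n m' : ℝ) + 1)) / ((n m : ℝ) + 1))| <
            εd t / (2 * ∏ m' : Fin M, ((n m' : ℝ) + 1))}) ∩ Set.Ico (0:ℝ) 1) := by
  have hit : 1 ≤ it t := by unfold it; omega
  have hnl : ¬ ∃ (b : ℚ) (a : Fin (t+1) → ℚ),
      -(z (it t)) = (b : ℝ) + ∑ i : Fin (t+1), (a i : ℝ) * y ((i:ℕ)+1) := by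
    rintro ⟨b, a, hba⟩
    apply hz (it t) hit
    refine ⟨t+1, -b, fun j => -(a j), fun j => (j:ℕ)+1, fun j => Nat.le_add_left 1 _, ?_⟩
    push_cast
    have hsum : ∑ x : Fin (t+1), (-(a x : ℝ)) * y ((x:ℕ)+1)
        = -∑ i : Fin (t+1), (a i : ℝ) * y ((i:ℕ)+1) := by
      rw [← Finset.sum_neg_distrib]
      exact Finset.sum_congr rfl fun _ _ => by ring
    rw [hsum]
    linarith [hba]
  obtain ⟨M, n, w, hM1, hmono, hgt, happ, hvol⟩ :=
    conj (t+1) (fun i => y ((i:ℕ)+1)) (-(z (it t))) hnl (εd t) (εd_pos t) (εd t) (εd_pos t)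
      (max n₀ 1) (by omega)
  have hgt' : ∀ m, n₀ < n m := fun m => lt_of_le_of_lt (le_max_left _ _) (hgt m)
  match M, hM1, n, w, hmono, hgt, hgt', happ, hvol with
  | 1, _, n, w, hmono, hgt, hgt', happ, hvol =>
    -- derive contradiction
    exfalso
    have hn2 : 2 ≤ n 0 := lt_of_le_of_lt (le_max_right _ _) (hgt 0)
    set K : ℝ := (n 0 : ℝ) + 1 with hK
    have hn2' : (2:ℝ) ≤ (n 0 : ℝ) := by exact_mod_cast hn2
    have hK3 : (3:ℝ) ≤ K := by rw [hK]; linarith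
    have hKne : K ≠ 0 := by linarith
    have hprod : (∏ m' : Fin 1, ((n m' : ℝ) + 1)) = K := by
      rw [Fin.prod_univ_one]
    have hset : (⋃ m : Fin 1, {x : ℝ | ∃ a : ℤ,
          |x - ((a : ℝ) + -(z (it t))) /
              ((∏ m' : Fin 1, ((n m' : ℝ) + 1)) / ((n m : ℝ) + 1))| <
            εd t / (2 * ∏ m' : Fin 1, ((n m' : ℝ) + 1))})
        = {x : ℝ | ∃ a : ℤ, |x - ((a : ℝ) + -(z (it t))) / ((1:ℕ):ℝ)| < εd t / (2 * K)} := by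
      ext x
      simp only [Set.mem_iUnion, Fin.exists_fin_one, Set.mem_setOf_eq, hprod, ← hK, div_self hKne,
        Nat.cast_one]
    rw [hset] at hvol
    have hKpos : (0:ℝ) < K := by linarith
    have hεle := εd_le t
    have hεpos := εd_pos t
    have hrpos : (0:ℝ) < εd t / (2 * K) := div_pos hεpos (by linarith)
    have hcb := cover_bound 1 le_rfl (εd t / (2 * K)) (-(z (it t)))
      hrpos (by
        push_cast
        rw [mul_one, div_le_one (by linarith)]
        linarith)
    have hle := le_trans hvol hcb
    rw [ENNReal.ofReal_le_ofReal_iff (by positivity)] at hle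
    have h1 : (((1:ℕ):ℝ) + 4) * (2 * (εd t / (2 * K))) = 5 * εd t / K := by
      push_cast
      field_simp
      ring
    rw [h1, le_div_iff₀ hKpos] at hle
    nlinarith [hle]
  | (m+2), _, n, w, hmono, hgt, hgt', happ, hvol =>
    exact ⟨m+2, n, w, by omega, hmono, hgt', happ, hvol⟩
lemma εd_sixteen (t : ℕ) : 16 * εd t = (1/2:ℝ)^t := by
  unfold εd
  rw [div_pow, one_pow, pow_add]
  norm_num
  ring

lemma εd_le_half_pow (s t : ℕ) (h : s ≤ t) : εd t ≤ (1/2:ℝ)^s := by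
  unfold εd
  rw [div_pow, one_pow]
  apply one_div_le_one_div_of_le (by positivity)
  exact pow_le_pow_right₀ (by norm_num) (by omega)
theorem stmt1'
    (conj : ∀ (ℓ : ℕ) (y : Fin ℓ → ℝ) (z : ℝ),
      (¬ ∃ (b : ℚ) (a : Fin ℓ → ℚ), z = (b : ℝ) + ∑ i : Fin ℓ, (a i : ℝ) * y i) →
      ∀ ε > (0 : ℝ), ∀ δ > (0 : ℝ), ∀ n₀ : ℕ, 0 < n₀ →
        ∃ (M : ℕ) (n : Fin M → ℕ) (w : Fin ℓ → ℝ),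
          1 ≤ M ∧ StrictMono n ∧ (∀ m, n₀ < n m) ∧
          (∀ m : Fin M, ∀ i : Fin ℓ, nint ((n m : ℝ) * y i - w i) ≤ ε / 2) ∧
          ENNReal.ofReal (1 - δ) ≤
            volume ((⋃ m : Fin M, {x : ℝ | ∃ a : ℤ,
              |x - ((a : ℝ) + z) /
                  ((∏ m' : Fin M, ((n m' : ℝ) + 1)) / ((n m : ℝ) + 1))| <
                ε / (2 * ∏ m' : Fin M, ((n m' : ℝ) + 1))}) ∩ Set.Ico (0:ℝ) 1))
    (y z : ℕ → ℝ)
    (hz : ∀ i : ℕ, 1 ≤ i →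
      ¬ ∃ (ℓ : ℕ) (b : ℚ) (a : Fin ℓ → ℚ) (idx : Fin ℓ → ℕ),
        (∀ j, 1 ≤ idx j) ∧ z i = (b : ℝ) + ∑ j : Fin ℓ, (a j : ℝ) * y (idx j)) :
    ∃ ψ : ℕ → ℝ,
      (∀ n, 0 ≤ ψ n) ∧
      (∀ i : ℕ, 1 ≤ i →
        volume {x : ℝ |
          {n : ℕ | 1 ≤ n ∧ nint ((n : ℝ) * x + y i) < ψ n}.Infinite} = 0) ∧
      (∀ i : ℕ, 1 ≤ i →
        volume {x : ℝ |
          ¬ {n : ℕ | 1 ≤ n ∧ nint ((n : ℝ) * x + z i) < ψ n}.Infinite} = 0) := by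
  classical
  have hstage := stage_exists conj y z hz
  choose Mf nf wf hM2 hmono hgt happ hvol using hstage
  set B : ℕ → ℕ := fun t => Nat.rec 1 (fun t ih => ∏ m : Fin (Mf t ih), (nf t ih m + 1)) t
    with hBdef
  have hBs : ∀ t, B (t+1) = ∏ m : Fin (Mf t (B t)), (nf t (B t) m + 1) := fun t => rfl
  have hM2' : ∀ t, 2 ≤ Mf t (B t) := fun t => hM2 t (B t)
  have hB1 : ∀ t, 1 ≤ B t := by
    intro t
    induction t with
    | zero => exact le_refl 1
    | succ t ih =>
      rw [hBs t]
      exact Finset.one_le_prod' (fun m _ => by omega)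
  have hNgt : ∀ t (m : Fin (Mf t (B t))), B t < nf t (B t) m := fun t m => hgt t (B t) m
  obtain ⟨kk, hkmul, hklb⟩ :
      ∃ kk : ∀ t, Fin (Mf t (B t)) → ℕ,
        (∀ t (m : Fin (Mf t (B t))), kk t m * (nf t (B t) m + 1) = B (t+1)) ∧
        (∀ t (m : Fin (Mf t (B t))), B t < kk t m) := by
    refine ⟨fun t m => ∏ m' ∈ Finset.univ.erase m, (nf t (B t) m' + 1), ?_, ?_⟩
    · intro t m
      beta_reduce
      rw [hBs t]
      exact Finset.prod_erase_mul _ _ (Finset.mem_univ m)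
    · intro t m
      beta_reduce
      obtain ⟨m', hm'⟩ : ∃ m' : Fin (Mf t (B t)), m' ≠ m := by
        refine Fintype.exists_ne_of_one_lt_card ?_ m
        rw [Fintype.card_fin]
        have := hM2' t
        omega
      have hmem : m' ∈ Finset.univ.erase m := Finset.mem_erase.2 ⟨hm', Finset.mem_univ _⟩
      have hle : nf t (B t) m' + 1 ≤ ∏ m' ∈ Finset.univ.erase m, (nf t (B t) m' + 1) :=
        Finset.single_le_prod' (f := fun i => nf t (B t) i + 1) (fun i _ => Nat.le_add_left 1 _) hmem
      have := hNgt t m'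
      omega
  have hkub : ∀ t (m : Fin (Mf t (B t))), kk t m ≤ B (t+1) := by
    intro t m
    rw [← hkmul t m]
    exact Nat.le_mul_of_pos_right _ (by omega)
  have hBlt : ∀ t, B t < B (t+1) := fun t =>
    lt_of_lt_of_le (hklb t ⟨0, by have := hM2' t; omega⟩) (hkub t _)
  have hBmono : StrictMono B := strictMono_nat_of_lt_succ hBlt
  have hkdis : ∀ t t' (m : Fin (Mf t (B t))) (m' : Fin (Mf t' (B t'))),
      t < t' → kk t m < kk t' m' := by
    intro t t' m m' htt
    calc kk t m ≤ B (t+1) := hkub t m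
      _ ≤ B t' := hBmono.monotone htt
      _ < kk t' m' := hklb t' m'
  have huniq_t : ∀ t t' (m : Fin (Mf t (B t))) (m' : Fin (Mf t' (B t'))),
      kk t m = kk t' m' → t = t' := by
    intro t t' m m' he
    rcases lt_trichotomy t t' with h | h | h
    · exact absurd he (Nat.ne_of_lt (hkdis t t' m m' h))
    · exact h
    · exact absurd he.symm (Nat.ne_of_lt (hkdis t' t m' m h))
  have hkinj : ∀ t (m m' : Fin (Mf t (B t))), kk t m = kk t m' → m = m' := by
    intro t m m' he
    have h1 := hkmul t m
    have h2 := hkmul t m'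
    have hpos : 0 < kk t m' := by have := hklb t m'; have := hB1 t; omega
    rw [he] at h1
    have hNe : nf t (B t) m = nf t (B t) m' :=
      by have := Nat.eq_of_mul_eq_mul_left hpos (h1.trans h2.symm); omega
    exact (hmono t (B t)).injective hNe
  -- the approximating function
  obtain ⟨ψ, hψ0, hψval, hψsupp⟩ :
      ∃ ψ : ℕ → ℝ, (∀ n, 0 ≤ ψ n) ∧
        (∀ t (m : Fin (Mf t (B t))), ψ (kk t m) = εd t / (2 * ((nf t (B t) m : ℝ) + 1))) ∧
        (∀ n, (¬ ∃ t, ∃ m : Fin (Mf t (B t)), kk t m = n) → ψ n = 0) := by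
    refine ⟨fun n => if h : ∃ t, ∃ m : Fin (Mf t (B t)), kk t m = n then
        εd h.choose / (2 * ((nf h.choose (B h.choose) h.choose_spec.choose : ℝ) + 1)) else 0, ?_, ?_, ?_⟩
    · intro n
      by_cases h : ∃ t, ∃ m : Fin (Mf t (B t)), kk t m = n
      · simp only [dif_pos h]
        have := εd_pos h.choose
        positivity
      · simp only [dif_neg h]
        exact le_rfl
    · intro t m
      have h : ∃ t', ∃ m' : Fin (Mf t' (B t')), kk t' m' = kk t m := ⟨t, m, rfl⟩
      simp only [dif_pos h]
      obtain ht := huniq_t _ _ _ _ h.choose_spec.choose_spec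
      revert ht
      generalize h.choose_spec.choose_spec = hk
      revert hk
      generalize h.choose_spec.choose = m'
      generalize h.choose = t' at *
      intro hk ht
      subst ht
      rw [hkinj _ _ _ hk]
    · intro n h
      simp only [dif_neg h]
  refine ⟨ψ, hψ0, ?_, ?_⟩
  · -- null sets for y i
    intro i hi
    have hper : ∀ (x : ℝ) (j : ℤ),
        x ∈ {x : ℝ | {n : ℕ | 1 ≤ n ∧ nint ((n : ℝ) * x + y i) < ψ n}.Infinite} ↔
        x + j ∈ {x : ℝ | {n : ℕ | 1 ≤ n ∧ nint ((n : ℝ) * x + y i) < ψ n}.Infinite} := by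
      intro x j
      have hset : ∀ n : ℕ, nint ((n:ℝ) * (x + (j:ℝ)) + y i) = nint ((n:ℝ) * x + y i) := by
        intro n
        have h : (n:ℝ) * (x + (j:ℝ)) + y i = ((n:ℝ) * x + y i) + (((n:ℤ) * j : ℤ) : ℝ) := by
          push_cast; ring
        rw [h, nint_add_int]
      simp only [Set.mem_setOf_eq]
      have heq : {n : ℕ | 1 ≤ n ∧ nint ((n:ℝ) * (x + (j:ℝ)) + y i) < ψ n}
          = {n : ℕ | 1 ≤ n ∧ nint ((n:ℝ) * x + y i) < ψ n} := by
        ext n; simp only [Set.mem_setOf_eq, hset n]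
      rw [heq]
    refine periodic_null _ hper ?_
    obtain ⟨E, hEvol, hEmem⟩ :
        ∃ E : ℕ → Set ℝ, (∀ t, volume (E t) ≤ ENNReal.ofReal ((1/2:ℝ)^t)) ∧
          (∀ t (ht : i ≤ t), ∀ x, x ∈ Set.Ico (0:ℝ) 1 →
            (∃ m : Fin (Mf t (B t)), nint ((kk t m : ℝ) * x + y i) < ψ (kk t m)) → x ∈ E t) := by
      refine ⟨fun t =>
        if h : i ≤ t then
          {x : ℝ | ∃ b : ℤ,
            |x - ((b : ℝ) + -(y i + wf t (B t) ⟨i-1, by omega⟩)) / (B (t+1) : ℕ)| <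
              εd t / (B (t+1) : ℕ)} ∩ Set.Ico (0:ℝ) 1
        else ∅, ?_, ?_⟩
      · intro t
        by_cases h : i ≤ t
        · simp only [dif_pos h]
          have hK1 : 1 ≤ B (t+1) := hB1 (t+1)
          have hKR : (1:ℝ) ≤ (B (t+1) : ℝ) := by exact_mod_cast hK1
          have hεpos := εd_pos t
          have hcb := cover_bound (B (t+1)) hK1 (εd t / (B (t+1) : ℕ))
            (-(y i + wf t (B t) ⟨i-1, by omega⟩))
            (div_pos hεpos (by linarith)) (by
              rw [div_mul_cancel₀]
              · linarith [εd_le t]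
              · linarith)
          refine hcb.trans (ENNReal.ofReal_le_ofReal ?_)
          have e1 : ((B (t+1) : ℝ) + 4) * (2 * (εd t / (B (t+1) : ℝ)))
              = 2 * εd t + 8 * (εd t / (B (t+1) : ℝ)) := by
            field_simp
            ring
          rw [e1]
          have e2 : εd t / (B (t+1) : ℝ) ≤ εd t := div_le_self (le_of_lt hεpos) hKR
          have e3 := εd_sixteen t
          linarith
        · simp only [dif_neg h]
          simp
      · rintro t ht x hxI ⟨m, hm⟩
        simp only [dif_pos ht]
        refine ⟨?_, hxI⟩
        rw [hψval t m] at hm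
        obtain ⟨b, hb⟩ := (nint_lt_iff _ _).1 hm
        set N : ℕ := nf t (B t) m with hN
        set W : ℝ := wf t (B t) ⟨i-1, by omega⟩ with hWdef
        have hNpos : (0:ℝ) < (N:ℝ) + 1 := by positivity
        -- the alignment condition from the conjecture
        have happ0 := happ t (B t) m ⟨i-1, by omega⟩
        have hival : ((⟨i-1, by omega⟩ : Fin (t+1)) : ℕ) + 1 = i := by
          simp only [Fin.val_mk]
          omega
        rw [hival] at happ0
        have hc : |((N:ℝ) * y i - W) - (round ((N:ℝ) * y i - W) : ℝ)| ≤ εd t / 2 := happ0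
        set c : ℤ := round ((N:ℝ) * y i - W) with hcdef
        -- cast of kk t m * (N + 1) = B (t+1)
        have hKr : (B (t+1) : ℝ) = ((N:ℝ) + 1) * (kk t m : ℝ) := by
          rw [← hkmul t m]
          push_cast
          ring
        rw [Set.mem_setOf_eq]
        refine ⟨((N:ℤ)+1) * b - c, ?_⟩
        have hBpos : (0:ℝ) < (B (t+1) : ℝ) := by
          have := hB1 (t+1); exact_mod_cast Nat.lt_of_lt_of_le Nat.zero_lt_one this
        have key : |(B (t+1) : ℝ) * x + (y i + W) - ((((N:ℤ)+1) * b - c : ℤ) : ℝ)| < εd t := by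
          have e4 : (B (t+1) : ℝ) * x + (y i + W) - ((((N:ℤ)+1) * b - c : ℤ) : ℝ)
              = ((N:ℝ)+1) * (((kk t m : ℝ)) * x + y i - b) - (((N:ℝ) * y i - W) - (c:ℝ)) := by
            rw [hKr]
            push_cast
            ring
          rw [e4]
          have h5 : |((N:ℝ)+1) * (((kk t m : ℝ)) * x + y i - b)| < εd t / 2 := by
            rw [abs_mul, abs_of_pos hNpos]
            have h6 := mul_lt_mul_of_pos_left hb hNpos
            have e7 : ((N:ℝ)+1) * (εd t / (2 * ((N:ℝ)+1))) = εd t / 2 := by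
              field_simp
            rw [e7] at h6
            exact h6
          calc |((N:ℝ)+1) * (((kk t m : ℝ)) * x + y i - b) - (((N:ℝ) * y i - W) - (c:ℝ))|
              ≤ |((N:ℝ)+1) * (((kk t m : ℝ)) * x + y i - b)| + |((N:ℝ) * y i - W) - (c:ℝ)| :=
                abs_sub _ _
            _ < εd t := by
                have := εd_pos t
                linarith
        have e8 : x - (((((N:ℤ)+1) * b - c : ℤ) : ℝ) + -(y i + W)) / (B (t+1) : ℕ)
            = ((B (t+1) : ℝ) * x + (y i + W) - ((((N:ℤ)+1) * b - c : ℤ) : ℝ)) / (B (t+1) : ℝ) := by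
          field_simp
          ring
        rw [e8, abs_div, abs_of_pos hBpos]
        exact (div_lt_div_iff_of_pos_right hBpos).mpr key
    have hsum : ∑' t, volume (E t) ≠ ⊤ := tsum_half_ne_top _ hEvol
    have hlim : volume (limsup E atTop) = 0 := measure_limsup_atTop_eq_zero hsum
    refine le_antisymm (le_trans (measure_mono ?_) (le_of_eq hlim)) zero_le
    rintro x ⟨hxS, hxI⟩
    rw [Set.mem_setOf_eq] at hxS
    rw [mem_limsup_iff_frequently_mem, frequently_atTop]
    intro T
    obtain ⟨n, hnmem, hngt⟩ := hxS.exists_gt (B (max T i + 1))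
    obtain ⟨hn1, hnint⟩ := hnmem
    have hψpos : 0 < ψ n := lt_of_le_of_lt (nint_nonneg _) hnint
    have hsupp : ∃ t, ∃ m : Fin (Mf t (B t)), kk t m = n := by
      by_contra hcon
      rw [hψsupp n hcon] at hψpos
      exact lt_irrefl _ hψpos
    obtain ⟨t, m, hkm⟩ := hsupp
    subst hkm
    have htgt : max T i < t := by
      have h2 : kk t m ≤ B (t+1) := hkub t m
      have h3 : B (max T i + 1) < B (t + 1) := lt_of_lt_of_le hngt h2
      have := (hBmono.lt_iff_lt (a := max T i + 1) (b := t + 1)).mp h3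
      omega
    exact ⟨t, by omega, hEmem t (by omega) x hxI ⟨m, hnint⟩⟩
  · -- full measure sets for z i
    intro i hi
    have hper : ∀ (x : ℝ) (j : ℤ),
        x ∈ {x : ℝ | ¬ {n : ℕ | 1 ≤ n ∧ nint ((n : ℝ) * x + z i) < ψ n}.Infinite} ↔
        x + j ∈ {x : ℝ | ¬ {n : ℕ | 1 ≤ n ∧ nint ((n : ℝ) * x + z i) < ψ n}.Infinite} := by
      intro x j
      have hset : ∀ n : ℕ, nint ((n:ℝ) * (x + (j:ℝ)) + z i) = nint ((n:ℝ) * x + z i) := by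
        intro n
        have h : (n:ℝ) * (x + (j:ℝ)) + z i = ((n:ℝ) * x + z i) + (((n:ℤ) * j : ℤ) : ℝ) := by
          push_cast; ring
        rw [h, nint_add_int]
      simp only [Set.mem_setOf_eq]
      have heq : {n : ℕ | 1 ≤ n ∧ nint ((n:ℝ) * (x + (j:ℝ)) + z i) < ψ n}
          = {n : ℕ | 1 ≤ n ∧ nint ((n:ℝ) * x + z i) < ψ n} := by
        ext n; simp only [Set.mem_setOf_eq, hset n]
      rw [heq]
    refine periodic_null _ hper ?_
    -- packaged stage union sets
    obtain ⟨U, hUmeas, hUvol, hUmem⟩ :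
        ∃ U : ℕ → Set ℝ, (∀ t, MeasurableSet (U t)) ∧
          (∀ t, ENNReal.ofReal (1 - εd t) ≤ volume (U t ∩ Set.Ico (0:ℝ) 1)) ∧
          (∀ t x, x ∈ U t → ∃ m : Fin (Mf t (B t)),
            nint ((kk t m : ℝ) * x + z (it t)) < ψ (kk t m)) := by
      refine ⟨fun t => ⋃ m : Fin (Mf t (B t)), {x : ℝ | ∃ a : ℤ,
          |x - ((a : ℝ) + -(z (it t))) /
              ((∏ m' : Fin (Mf t (B t)), ((nf t (B t) m' : ℝ) + 1)) / ((nf t (B t) m : ℝ) + 1))| <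
            εd t / (2 * ∏ m' : Fin (Mf t (B t)), ((nf t (B t) m' : ℝ) + 1))}, ?_, ?_, ?_⟩
      · intro t
        apply MeasurableSet.iUnion
        intro m
        have heq : {x : ℝ | ∃ a : ℤ,
            |x - ((a : ℝ) + -(z (it t))) /
                ((∏ m' : Fin (Mf t (B t)), ((nf t (B t) m' : ℝ) + 1)) / ((nf t (B t) m : ℝ) + 1))| <
              εd t / (2 * ∏ m' : Fin (Mf t (B t)), ((nf t (B t) m' : ℝ) + 1))}
            = ⋃ a : ℤ, Metric.ball
              (((a : ℝ) + -(z (it t))) /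
                ((∏ m' : Fin (Mf t (B t)), ((nf t (B t) m' : ℝ) + 1)) / ((nf t (B t) m : ℝ) + 1)))
              (εd t / (2 * ∏ m' : Fin (Mf t (B t)), ((nf t (B t) m' : ℝ) + 1))) := by
          ext u
          simp only [Set.mem_setOf_eq, Set.mem_iUnion, Metric.mem_ball, Real.dist_eq]
        rw [heq]
        exact MeasurableSet.iUnion (fun a => measurableSet_ball)
      · intro t
        exact hvol t (B t)
      · intro t x hx
        rw [Set.mem_iUnion] at hx
        obtain ⟨m, hm⟩ := hx
        rw [Set.mem_setOf_eq] at hm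
        obtain ⟨a, ha⟩ := hm
        refine ⟨m, ?_⟩
        set N : ℕ := nf t (B t) m with hN
        have hNpos : (0:ℝ) < (N:ℝ) + 1 := by positivity
        have hkpos : (0:ℝ) < (kk t m : ℝ) := by
          have := hklb t m
          have := hB1 t
          exact_mod_cast by omega
        have hBprod : (∏ m' : Fin (Mf t (B t)), ((nf t (B t) m' : ℝ) + 1)) = (B (t+1) : ℝ) := by
          rw [hBs t]
          push_cast
          rfl
        have hKr : (B (t+1) : ℝ) = (kk t m : ℝ) * ((N:ℝ) + 1) := by
          rw [← hkmul t m]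
          push_cast
          ring
        have hdenom : (∏ m' : Fin (Mf t (B t)), ((nf t (B t) m' : ℝ) + 1)) / ((N:ℝ) + 1)
            = (kk t m : ℝ) := by
          rw [hBprod, hKr]
          field_simp
        rw [hdenom, hBprod] at ha
        -- multiply through by kk t m
        have ha2 : |(kk t m : ℝ) * x + z (it t) - (a:ℝ)| < εd t / (2 * ((N:ℝ) + 1)) := by
          have e1 : (kk t m : ℝ) * x + z (it t) - (a:ℝ)
              = (kk t m : ℝ) * (x - ((a:ℝ) + -(z (it t))) / (kk t m : ℝ)) := by
            field_simp
            ring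
          have e2 : (kk t m : ℝ) * (εd t / (2 * (B (t+1) : ℝ))) = εd t / (2 * ((N:ℝ) + 1)) := by
            rw [hKr]
            field_simp
          rw [e1, abs_mul, abs_of_pos hkpos, ← e2]
          exact mul_lt_mul_of_pos_left ha hkpos
        rw [hψval t m]
        exact lt_of_le_of_lt (nint_le _ a) ha2
    -- the complements within [0,1)
    have hFvol : ∀ s : ℕ, volume (Set.Ico (0:ℝ) 1 \ U (Nat.pair (i-1) s))
        ≤ ENNReal.ofReal ((1/2:ℝ)^s) := by
      intro s
      set t := Nat.pair (i-1) s with htdef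
      have hadd := measure_inter_add_diff (μ := volume) (Set.Ico (0:ℝ) 1) (hUmeas t)
      have hIco : volume (Set.Ico (0:ℝ) 1) = 1 := by simp
      rw [hIco] at hadd
      have hlow : ENNReal.ofReal (1 - εd t) ≤ volume (Set.Ico (0:ℝ) 1 ∩ U t) := by
        rw [Set.inter_comm]
        exact hUvol t
      have hb : volume (Set.Ico (0:ℝ) 1 \ U t) ≤ 1 - ENNReal.ofReal (1 - εd t) := by
        apply ENNReal.le_sub_of_add_le_left ENNReal.ofReal_ne_top
        calc ENNReal.ofReal (1 - εd t) + volume (Set.Ico (0:ℝ) 1 \ U t)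
            ≤ volume (Set.Ico (0:ℝ) 1 ∩ U t) + volume (Set.Ico (0:ℝ) 1 \ U t) := by
              exact add_le_add_left hlow _
          _ = 1 := hadd
      refine hb.trans ?_
      have he : (1 : ENNReal) - ENNReal.ofReal (1 - εd t) = ENNReal.ofReal (εd t) := by
        rw [← ENNReal.ofReal_one, ← ENNReal.ofReal_sub _ (by linarith [εd_le t] : (0:ℝ) ≤ 1 - εd t)]
        norm_num
      rw [he]
      apply ENNReal.ofReal_le_ofReal
      exact εd_le_half_pow s t (by rw [htdef]; exact Nat.right_le_pair _ _)
    have hsum : ∑' s, volume (Set.Ico (0:ℝ) 1 \ U (Nat.pair (i-1) s)) ≠ ⊤ :=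
      tsum_half_ne_top _ hFvol
    have hlim : volume (limsup (fun s => Set.Ico (0:ℝ) 1 \ U (Nat.pair (i-1) s)) atTop) = 0 :=
      measure_limsup_atTop_eq_zero hsum
    refine le_antisymm (le_trans (measure_mono ?_) (le_of_eq hlim)) zero_le
    rintro x ⟨hxS, hxI⟩
    rw [Set.mem_setOf_eq] at hxS
    rw [mem_limsup_iff_frequently_mem]
    by_cases hc : ∀ T, ∃ s, T ≤ s ∧ x ∈ U (Nat.pair (i-1) s)
    · exfalso
      apply hxS
      apply Set.infinite_of_forall_exists_gt
      intro b
      obtain ⟨s, hsb, hxU⟩ := hc b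
      obtain ⟨m, hm⟩ := hUmem (Nat.pair (i-1) s) x hxU
      have hτ : it (Nat.pair (i-1) s) = i := by
        unfold it
        rw [Nat.unpair_pair]
        omega
      rw [hτ] at hm
      refine ⟨kk (Nat.pair (i-1) s) m, ⟨?_, hm⟩, ?_⟩
      · have := hklb (Nat.pair (i-1) s) m
        have := hB1 (Nat.pair (i-1) s)
        omega
      · have h1 := hklb (Nat.pair (i-1) s) m
        have h2 : Nat.pair (i-1) s ≤ B (Nat.pair (i-1) s) := hBmono.le_apply
        have h3 : s ≤ Nat.pair (i-1) s := Nat.right_le_pair _ _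
        omega
    · push_neg at hc
      obtain ⟨T, hT⟩ := hc
      apply Filter.Eventually.frequently
      rw [eventually_atTop]
      exact ⟨T, fun s hs => ⟨hxI, hT s hs⟩⟩


theorem stmt1
    -- Conjecture 3.1 (dynamically defined covering systems), as a hypothesis:
    (conj : ∀ (ℓ : ℕ) (y : Fin ℓ → ℝ) (z : ℝ),
      (¬ ∃ (b : ℚ) (a : Fin ℓ → ℚ), z = (b : ℝ) + ∑ i : Fin ℓ, (a i : ℝ) * y i) →
      ∀ ε > (0 : ℝ), ∀ δ > (0 : ℝ), ∀ n₀ : ℕ, 0 < n₀ →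
        ∃ (M : ℕ) (n : Fin M → ℕ) (w : Fin ℓ → ℝ),
          1 ≤ M ∧ StrictMono n ∧ (∀ m, n₀ < n m) ∧
          (∀ m : Fin M, ∀ i : Fin ℓ, nint ((n m : ℝ) * y i - w i) ≤ ε / 2) ∧
          ENNReal.ofReal (1 - δ) ≤
            volume ((⋃ m : Fin M, {x : ℝ | ∃ a : ℤ,
              |x - ((a : ℝ) + z) /
                  ((∏ m' : Fin M, ((n m' : ℝ) + 1)) / ((n m : ℝ) + 1))| <
                ε / (2 * ∏ m' : Fin M, ((n m' : ℝ) + 1))}) ∩ Set.Ico (0:ℝ) 1))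
    (y z : ℕ → ℝ)
    -- no z i is a rational linear combination of 1 and finitely many of the y i:
    (hz : ∀ i : ℕ, 1 ≤ i →
      ¬ ∃ (ℓ : ℕ) (b : ℚ) (a : Fin ℓ → ℚ) (idx : Fin ℓ → ℕ),
        (∀ j, 1 ≤ idx j) ∧ z i = (b : ℝ) + ∑ j : Fin ℓ, (a j : ℝ) * y (idx j)) :
    ∃ ψ : ℕ → ℝ,
      (∀ n, 0 ≤ ψ n) ∧
      (∀ i : ℕ, 1 ≤ i →
        volume {x : ℝ |
          {n : ℕ | 1 ≤ n ∧ nint ((n : ℝ) * x + y i) < ψ n}.Infinite} = 0) ∧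
      (∀ i : ℕ, 1 ≤ i →
        volume {x : ℝ |
          ¬ {n : ℕ | 1 ≤ n ∧ nint ((n : ℝ) * x + z i) < ψ n}.Infinite} = 0) := by
  exact stmt1' conj y z hz
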